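/- Let p be a positive probability mass function on a product V^2 (two-token sequences over finite vocabulary V), α > 1. The chain of equalities: the power conditional of the first token can be written as p^pow_α(x₁) = 1 / (1 + Σ_{x'₁ ≠ x₁} [p(x'₁)^α/p(x₁)^α] · [ζ(x'₁)/ζ(x₁)]), where p(x₁) is the first-token marginal, ζ(a) = Σ_{x₂} p(x₂ | a)^α, and p^pow_α(x₁) = Σ_{x₂} p(x₁, x₂)^α / Σ_{x'₁, x₂} p(x'₁, x₂)^α. -/
import Mathlib


/-- Two-token special case of the decomposition: for a positive pmf `p` on `V × V`, with
first-token marginal `m a = Σ_b p(a,b)`, conditionals `p(b|a) = p(a,b)/m a` and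
`ζ a = Σ_b p(b|a)^α`, the power conditional of the first token satisfies
`p^pow_α(x₁) = 1 / (1 + Σ_{x'₁ ≠ x₁} (m x'₁ / m x₁)^α-style ratio · ζ(x'₁)/ζ(x₁))`. -/
theorem power_first_token_reciprocal_form
    {V : Type*} [Fintype V] [Nonempty V] [DecidableEq V]
    (p : V × V → ℝ) (hp : ∀ x, 0 < p x) (hsum : ∑ x, p x = 1)
    (α : ℝ) (hα : 1 < α) (x₁ : V) :
    (∑ x₂, p (x₁, x₂) ^ α) / (∑ x'₁, ∑ x₂, p (x'₁, x₂) ^ α)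
      = 1 / (1 + ∑ x'₁ ∈ Finset.univ.erase x₁,
          ((∑ x₂, p (x'₁, x₂)) ^ α / (∑ x₂, p (x₁, x₂)) ^ α) *
            ((∑ x₂, (p (x'₁, x₂) / ∑ x'₂, p (x'₁, x'₂)) ^ α) /
              (∑ x₂, (p (x₁, x₂) / ∑ x'₂, p (x₁, x'₂)) ^ α))) := by
  have hm : ∀ a : V, 0 < ∑ x₂, p (a, x₂) :=
    fun a => Finset.sum_pos (fun b _ => hp _) Finset.univ_nonempty
  have hS : ∀ a : V, 0 < ∑ x₂, p (a, x₂) ^ α :=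
    fun a => Finset.sum_pos (fun b _ => Real.rpow_pos_of_pos (hp _) α) Finset.univ_nonempty
  have hmα : ∀ a : V, 0 < (∑ x₂, p (a, x₂)) ^ α :=
    fun a => Real.rpow_pos_of_pos (hm a) α
  -- ζ in terms of S and m
  have hz : ∀ a : V, (∑ x₂, (p (a, x₂) / ∑ x'₂, p (a, x'₂)) ^ α)
      = (∑ x₂, p (a, x₂) ^ α) / (∑ x₂, p (a, x₂)) ^ α := by
    intro a
    rw [Finset.sum_div]
    refine Finset.sum_congr rfl fun b _ => ?_
    rw [Real.div_rpow (hp _).le (hm a).le]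
  -- each summand simplifies to S a / S x₁
  have hterm : ∀ a : V,
      ((∑ x₂, p (a, x₂)) ^ α / (∑ x₂, p (x₁, x₂)) ^ α) *
        ((∑ x₂, (p (a, x₂) / ∑ x'₂, p (a, x'₂)) ^ α) /
          (∑ x₂, (p (x₁, x₂) / ∑ x'₂, p (x₁, x'₂)) ^ α))
      = (∑ x₂, p (a, x₂) ^ α) / (∑ x₂, p (x₁, x₂) ^ α) := by
    intro a
    rw [hz a, hz x₁, div_div_div_comm, mul_div_assoc',
      mul_div_cancel_left₀ _ (div_pos (hmα a) (hmα x₁)).ne']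
  rw [Finset.sum_congr rfl fun a _ => hterm a]
  rw [← Finset.sum_div]
  have herase : (∑ a ∈ Finset.univ.erase x₁, ∑ x₂, p (a, x₂) ^ α)
      = (∑ a, ∑ x₂, p (a, x₂) ^ α) - ∑ x₂, p (x₁, x₂) ^ α := by
    rw [eq_sub_iff_add_eq, Finset.sum_erase_add _ _ (Finset.mem_univ x₁)]
  rw [herase]
  have hT : 0 < ∑ a, ∑ x₂, p (a, x₂) ^ α :=
    Finset.sum_pos (fun a _ => hS a) Finset.univ_nonempty
  have h1 : 1 + ((∑ a, ∑ x₂, p (a, x₂) ^ α) - ∑ x₂, p (x₁, x₂) ^ α) / (∑ x₂, p (x₁, x₂) ^ α)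
      = (∑ a, ∑ x₂, p (a, x₂) ^ α) / (∑ x₂, p (x₁, x₂) ^ α) := by
    rw [sub_div, div_self (hS x₁).ne']
    ring
  rw [h1, one_div_div]
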